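/- arXiv:2401.07051 — 2 statements merged into one kernel-verified Lean document; each statement's English description precedes it below -/
import Mathlib

section
/- Let X₀, …, X_T be real random variables on a common probability space such that each X_t has the Gaussian law with mean μ_t and variance σ_t² (σ_t > 0). For each t let δ_t ∈ (0,1), g_t ∈ ℝ, and let q_t be the δ_t-quantile of the standard Gaussian. Suppose the per-step deterministic constraints μ_t ≤ g_t + σ_t·q_t hold for all t, that Σ_{t=0}^T δ_t ≤ δ, and that Σ_{t=0}^T g_t ≤ (T+1)·g. Then the cumulative chance constraint P( (1/(T+1)) Σ_{t=0}^T X_t ≤ g ) ≥ 1 − δ holds. -/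
open MeasureTheory ProbabilityTheory
open scoped ENNReal

lemma gaussianReal_std_map_neg :
    (gaussianReal 0 1).map (fun x : ℝ => -x) = gaussianReal 0 1 := by
  have h := gaussianReal_map_const_mul (μ := 0) (v := 1) (-1)
  simp only [neg_one_mul, mul_zero] at h
  have hv : NNReal.mk ((-1 : ℝ) ^ 2) (sq_nonneg _) * 1 = 1 :=
    NNReal.coe_injective (by simp)
  rw [hv] at h
  exact h

lemma gaussianReal_std_Ioi_neg (a : ℝ) :
    gaussianReal 0 1 (Set.Ioi (-a)) = gaussianReal 0 1 (Set.Iic a) := by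
  have h1 : gaussianReal 0 1 (Set.Ioi (-a))
      = ((gaussianReal 0 1).map (fun x : ℝ => -x)) (Set.Ioi (-a)) := by
    rw [gaussianReal_std_map_neg]
  rw [h1, Measure.map_apply measurable_neg measurableSet_Ioi]
  have hpre : (fun x : ℝ => -x) ⁻¹' Set.Ioi (-a) = Set.Iio a := by
    ext x; simp [Set.mem_Ioi, Set.mem_Iio, neg_lt_neg_iff]
  rw [hpre]
  -- Iio and Iic differ by a null singleton
  have hs : gaussianReal 0 1 {a} = 0 := by
    refine gaussianReal_absolutelyContinuous 0 one_ne_zero ?_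
    simp
  apply le_antisymm (measure_mono Set.Iio_subset_Iic_self)
  calc gaussianReal 0 1 (Set.Iic a) = gaussianReal 0 1 (Set.Iio a ∪ {a}) := by
        rw [Set.Iio_union_right]
    _ ≤ gaussianReal 0 1 (Set.Iio a) + gaussianReal 0 1 {a} := measure_union_le _ _
    _ = gaussianReal 0 1 (Set.Iio a) := by rw [hs, add_zero]

lemma gaussian_scaled (m s : ℝ) (hs : 0 < s) :
    (gaussianReal 0 1).map (fun x : ℝ => s * x + m)
      = gaussianReal m ⟨s ^ 2, sq_nonneg _⟩ := by
  have h1 : (gaussianReal 0 1).map (fun x : ℝ => s * x)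
      = gaussianReal 0 ⟨s ^ 2, sq_nonneg _⟩ := by
    have := gaussianReal_map_const_mul (μ := 0) (v := 1) s
    simp at this
    exact this
  have hcomp : (fun x : ℝ => s * x + m) = (fun x : ℝ => x + m) ∘ (fun x : ℝ => s * x) := rfl
  rw [hcomp, ← Measure.map_map (measurable_id'.add_const m) (measurable_const_mul s), h1]
  have h2 := gaussianReal_map_add_const (μ := 0) (v := ⟨s ^ 2, sq_nonneg _⟩) m
  rw [zero_add] at h2
  exact h2

lemma step_bound {Ω : Type*} [MeasurableSpace Ω] (Pr : Measure Ω) [IsProbabilityMeasure Pr]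
    (X : Ω → ℝ) (m s d gg qq : ℝ) (hs : 0 < s)
    (hX : Measure.map X Pr = gaussianReal m ⟨s ^ 2, sq_nonneg _⟩)
    (hq : gaussianReal 0 1 (Set.Iic qq) = ENNReal.ofReal d)
    (hdet : m ≤ gg + s * qq) :
    Pr {ω | gg < X ω} ≤ ENNReal.ofReal d := by
  have hXm : AEMeasurable X Pr := by
    apply aemeasurable_of_map_neZero
    rw [hX]
    exact (inferInstance : NeZero (gaussianReal m (NNReal.mk (s ^ 2) (sq_nonneg _))))
  have h1 : Pr {ω | gg < X ω} = gaussianReal m ⟨s ^ 2, sq_nonneg _⟩ (Set.Ioi gg) := by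
    rw [← hX, Measure.map_apply_of_aemeasurable hXm measurableSet_Ioi]
    rfl
  rw [h1, ← gaussian_scaled m s hs,
    Measure.map_apply (by fun_prop) measurableSet_Ioi]
  have hpre : (fun x : ℝ => s * x + m) ⁻¹' Set.Ioi gg = Set.Ioi ((gg - m) / s) := by
    ext x
    simp only [Set.mem_preimage, Set.mem_Ioi]
    rw [div_lt_iff₀ hs]
    constructor <;> intro h <;> nlinarith
  rw [hpre]
  have hsub : Set.Ioi ((gg - m) / s) ⊆ Set.Ioi (-qq) := by
    apply Set.Ioi_subset_Ioi
    rw [le_div_iff₀ hs]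
    nlinarith
  calc gaussianReal 0 1 (Set.Ioi ((gg - m) / s))
      ≤ gaussianReal 0 1 (Set.Ioi (-qq)) := measure_mono hsub
    _ = gaussianReal 0 1 (Set.Iic qq) := gaussianReal_std_Ioi_neg qq
    _ = ENNReal.ofReal d := hq

/-- **Feasibility direction of Lemma 1**: per-step deterministic constraints on the
Gaussian means imply the cumulative (trajectory-level) chance constraint. -/
theorem per_step_deterministic_implies_cumulative_chance
    {Ω : Type*} [MeasurableSpace Ω] (Pr : Measure Ω) [IsProbabilityMeasure Pr]
    (T : ℕ) (X : Fin (T + 1) → Ω → ℝ)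
    (μ σ δt gt q : Fin (T + 1) → ℝ) (δ g : ℝ)
    (hσ : ∀ t, 0 < σ t) (hδt : ∀ t, δt t ∈ Set.Ioo (0 : ℝ) 1)
    (hX : ∀ t, Measure.map (X t) Pr = gaussianReal (μ t) ⟨(σ t) ^ 2, sq_nonneg _⟩)
    (hq : ∀ t, gaussianReal 0 1 (Set.Iic (q t)) = ENNReal.ofReal (δt t))
    (hdet : ∀ t, μ t ≤ gt t + σ t * q t)
    (hδsum : ∑ t, δt t ≤ δ)
    (hgsum : ∑ t, gt t ≤ (T + 1 : ℝ) * g) :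
    ENNReal.ofReal (1 - δ) ≤ Pr {ω | (1 / (T + 1 : ℝ)) * ∑ t, X t ω ≤ g} := by
  set A := {ω | (1 / (T + 1 : ℝ)) * ∑ t, X t ω ≤ g} with hA
  have hTpos : (0 : ℝ) < (T + 1 : ℝ) := by positivity
  -- complement is covered by per-step exceedance events
  have hcover : Aᶜ ⊆ ⋃ t, {ω | gt t < X t ω} := by
    intro ω hω
    by_contra hcon
    simp only [Set.mem_iUnion, Set.mem_setOf_eq, not_exists, not_lt] at hcon
    apply hω
    show (1 / (T + 1 : ℝ)) * ∑ t, X t ω ≤ g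
    have hsum : ∑ t, X t ω ≤ ∑ t, gt t := Finset.sum_le_sum fun t _ => hcon t
    rw [div_mul_eq_mul_div, one_mul, div_le_iff₀ hTpos]
    calc ∑ t, X t ω ≤ ∑ t, gt t := hsum
      _ ≤ (T + 1 : ℝ) * g := hgsum
      _ = g * (T + 1 : ℝ) := mul_comm _ _
  have hcompl : Pr Aᶜ ≤ ENNReal.ofReal δ := by
    calc Pr Aᶜ ≤ Pr (⋃ t, {ω | gt t < X t ω}) := measure_mono hcover
      _ ≤ ∑ t, Pr {ω | gt t < X t ω} := measure_iUnion_fintype_le _ _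
      _ ≤ ∑ t, ENNReal.ofReal (δt t) := Finset.sum_le_sum fun t _ =>
          step_bound Pr (X t) (μ t) (σ t) (δt t) (gt t) (q t) (hσ t) (hX t) (hq t) (hdet t)
      _ = ENNReal.ofReal (∑ t, δt t) := by
          rw [ENNReal.ofReal_sum_of_nonneg fun t _ => (hδt t).1.le]
      _ ≤ ENNReal.ofReal δ := ENNReal.ofReal_le_ofReal hδsum
  have hone : (1 : ℝ≥0∞) ≤ Pr A + Pr Aᶜ := by
    rw [← measure_univ (μ := Pr), ← Set.union_compl_self A]
    exact measure_union_le _ _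
  have h2 : (1 : ℝ≥0∞) ≤ Pr A + ENNReal.ofReal δ :=
    hone.trans (add_le_add_right hcompl _)
  have h3 : (1 : ℝ≥0∞) - ENNReal.ofReal δ ≤ Pr A :=
    tsub_le_iff_right.mpr h2
  refine le_trans ?_ h3
  rw [← ENNReal.ofReal_one, ← ENNReal.ofReal_sub _ (le_trans (Finset.sum_nonneg
    fun t _ => (hδt t).1.le) hδsum)]
end

section
/- Let S be a nonempty finite state space, P a row-stochastic matrix on S with strictly positive invariant probability distribution η, P̃(s',s) := η(s)·P(s,s')/η(s') the backward matrix, c : S → ℝ, and T ∈ ℕ a horizon. For a fixed time step t with 0 ≤ t ≤ T define the backward value V̄_t(s) := Σ_{k=0}^{t} Σ_{s'} (P̃^k)(s,s')·c(s') and the forward value V_t(s) := Σ_{k=0}^{T−t} Σ_{s'} (P^k)(s,s')·c(s'). Then the state-level constrained quantity averaged over the stationary distribution equals the expected trajectory-level cumulative cost: Σ_s η(s)·( V̄_t(s) + V_t(s) − c(s) ) = (T+1)·Σ_s η(s)·c(s). In particular, if Σ_s η(s)·(V̄_t(s)+V_t(s)−c(s)) ≤ g' for some t, then the expected cumulative cost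 of the stationary chain over the horizon, Σ_{k=0}^{T} Σ_s η(s)·c(s), is at most g'. -/
lemma inv_pow_aux {S : Type*} [Fintype S] [DecidableEq S]
    (P : Matrix S S ℝ) (η : S → ℝ)
    (hinv : ∀ s', ∑ s, η s * P s s' = η s') :
    ∀ k s', ∑ s, η s * (P ^ k) s s' = η s' := by
  intro k
  induction k with
  | zero =>
    intro s'
    simp [Matrix.one_apply, Finset.sum_ite_eq', mul_ite]
  | succ k ih =>
    intro s'
    have hstep : ∀ u, ∑ s, η s * ((P ^ k) s u * P u s') = η u * P u s' := by
      intro u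
      simp only [← mul_assoc]
      rw [← Finset.sum_mul, ih]
    have : (P ^ (k+1)) = P ^ k * P := pow_succ P k
    simp only [this, Matrix.mul_apply, Finset.mul_sum]
    rw [Finset.sum_comm]
    simp only [hstep]
    exact hinv s'

/-- **State-level constraint equals the trajectory-level cumulative cost** under
stationarity: with the backward value `V̄_t(s) = Σ_{k=0}^t Σ_{s'} (P̃^k)(s,s')·c(s')`
and the forward value `V_t(s) = Σ_{k=0}^{T-t} Σ_{s'} (P^k)(s,s')·c(s')`,
`Σ_s η(s)·(V̄_t(s) + V_t(s) - c(s)) = (T+1)·Σ_s η(s)·c(s)`; hence, a state-level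
bound `≤ g'` yields the trajectory-level bound `Σ_{k=0}^T Σ_s η(s)·c(s) ≤ g'`. -/
theorem state_level_constraint_eq_trajectory_level
    {S : Type*} [Fintype S] [DecidableEq S] [Nonempty S]
    (P : Matrix S S ℝ) (η : S → ℝ)
    (hP0 : ∀ s s', 0 ≤ P s s') (hP1 : ∀ s, ∑ s', P s s' = 1)
    (hη : ∀ s, 0 < η s) (hηsum : ∑ s, η s = 1)
    (hinv : ∀ s', ∑ s, η s * P s s' = η s')
    (Pb : Matrix S S ℝ) (hPb : ∀ s' s, Pb s' s = η s * P s s' / η s')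
    (c : S → ℝ) (T t : ℕ) (ht : t ≤ T)
    (Vbar V : S → ℝ)
    (hVbar : ∀ s, Vbar s = ∑ k ∈ Finset.range (t + 1), ∑ s', (Pb ^ k) s s' * c s')
    (hV : ∀ s, V s = ∑ k ∈ Finset.range (T - t + 1), ∑ s', (P ^ k) s s' * c s') :
    (∑ s, η s * (Vbar s + V s - c s) = (T + 1 : ℝ) * ∑ s, η s * c s) ∧
    (∀ g' : ℝ, ∑ s, η s * (Vbar s + V s - c s) ≤ g' →
      ∑ k ∈ Finset.range (T + 1), ∑ s, η s * c s ≤ g') := by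
  have hinvb : ∀ s', ∑ s, η s * Pb s s' = η s' := by
    intro s'
    have h1 : ∀ s, η s * Pb s s' = η s' * P s' s := by
      intro s
      have hne : η s ≠ 0 := (hη s).ne'
      rw [hPb s s']
      field_simp
    simp only [h1, ← Finset.mul_sum, hP1, mul_one]
  have hPpow := inv_pow_aux P η hinv
  have hPbpow := inv_pow_aux Pb η hinvb
  have key : ∀ (M : Matrix S S ℝ), (∀ s', ∑ s, η s * M s s' = η s') →
      ∑ s, ∑ s', η s * (M s s' * c s') = ∑ s, η s * c s := by
    intro M hM
    rw [Finset.sum_comm]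
    have h2 : ∀ s', ∑ s, η s * (M s s' * c s') = η s' * c s' := by
      intro s'
      simp only [← mul_assoc]
      rw [← Finset.sum_mul, hM]
    simp only [h2]
  have hVbarSum : ∑ s, η s * Vbar s = (t + 1 : ℝ) * ∑ s, η s * c s := by
    calc ∑ s, η s * Vbar s
        = ∑ k ∈ Finset.range (t+1), ∑ s, ∑ s', η s * ((Pb ^ k) s s' * c s') := by
          simp only [hVbar, Finset.mul_sum]
          exact Finset.sum_comm
      _ = ∑ k ∈ Finset.range (t+1), ∑ s, η s * c s := by
          refine Finset.sum_congr rfl fun k _ => key _ (hPbpow k)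
      _ = (t + 1 : ℝ) * ∑ s, η s * c s := by
          rw [Finset.sum_const, Finset.card_range, nsmul_eq_mul]
          push_cast; ring
  have hVSum : ∑ s, η s * V s = ((T - t : ℕ) + 1 : ℝ) * ∑ s, η s * c s := by
    calc ∑ s, η s * V s
        = ∑ k ∈ Finset.range (T-t+1), ∑ s, ∑ s', η s * ((P ^ k) s s' * c s') := by
          simp only [hV, Finset.mul_sum]
          exact Finset.sum_comm
      _ = ∑ k ∈ Finset.range (T-t+1), ∑ s, η s * c s := by
          refine Finset.sum_congr rfl fun k _ => key _ (hPpow k)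
      _ = ((T - t : ℕ) + 1 : ℝ) * ∑ s, η s * c s := by
          rw [Finset.sum_const, Finset.card_range, nsmul_eq_mul]
          push_cast; ring
  have hmain : ∑ s, η s * (Vbar s + V s - c s) = (T + 1 : ℝ) * ∑ s, η s * c s := by
    have expand : ∑ s, η s * (Vbar s + V s - c s)
        = (∑ s, η s * Vbar s) + (∑ s, η s * V s) - ∑ s, η s * c s := by
      rw [← Finset.sum_add_distrib, ← Finset.sum_sub_distrib]
      exact Finset.sum_congr rfl fun s _ => by ring
    rw [expand, hVbarSum, hVSum]
    have hcast : ((T - t : ℕ) : ℝ) = (T : ℝ) - t := by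
      push_cast [ht]; ring
    rw [hcast]; ring
  refine ⟨hmain, fun g' hg' => ?_⟩
  have hsum : ∑ k ∈ Finset.range (T + 1), ∑ s, η s * c s
      = (T + 1 : ℝ) * ∑ s, η s * c s := by
    rw [Finset.sum_const, Finset.card_range, nsmul_eq_mul]
    push_cast; ring
  rw [hsum, ← hmain]; exact hg'
end
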